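/- Let d ≥ 1 be an integer. For all indices i₁, i₂, i₃, i₄ ∈ {1, …, d} (repetitions allowed) and every u ∈ ℝ^d, the fourth-order partial derivative of Ψ₁ satisfies |(∂_{i₁}∂_{i₂}∂_{i₃}∂_{i₄} Ψ₁)(u)| ≤ 1/16, where Ψ₁(u) = ∏_{i=1}^{d} sinc(u_i/4)⁴. -/

import Mathlib

/-- The cardinal sine function: `sinc z = sin z / z` for `z ≠ 0`, `sinc 0 = 1`. -/
noncomputable def sinc (x : ℝ) : ℝ := if x = 0 then 1 else Real.sin x / x

/-- The sinc-4 kernel (bandwidth one) on `ℝ^d`. -/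
noncomputable def Psi1 (d : ℕ) (u : EuclideanSpace ℝ (Fin d)) : ℝ :=
  ∏ i, sinc (u i / 4) ^ 4

open Real intervalIntegral MeasureTheory


noncomputable def HK (k : ℕ) (y : ℝ) : ℝ :=
  ∫ t in (0:ℝ)..2, (1 - t/2) * t^k * Real.cos (t*y + k*(π/2))

lemma hasDerivAt_HK (k : ℕ) (y : ℝ) : HasDerivAt (HK k) (HK (k+1) y) y := by
  have key : IntervalIntegrable (fun t => (1 - t/2) * t^(k+1) * Real.cos (t*y + (k+1)*(π/2))) volume 0 2 ∧
      HasDerivAt (fun x => ∫ t in (0:ℝ)..2, (1 - t/2) * t^k * Real.cos (t*x + k*(π/2)))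
        (∫ t in (0:ℝ)..2, (1 - t/2) * t^(k+1) * Real.cos (t*y + (k+1)*(π/2))) y := by
    apply intervalIntegral.hasDerivAt_integral_of_dominated_loc_of_deriv_le
      (F := fun x t => (1 - t/2) * t^k * Real.cos (t*x + k*(π/2)))
      (F' := fun x t => (1 - t/2) * t^(k+1) * Real.cos (t*x + (k+1)*(π/2)))
      (bound := fun _ => 2^(k+1)) (s := Metric.ball y 1) (Metric.ball_mem_nhds y one_pos)
    · filter_upwards with x
      exact (Continuous.aestronglyMeasurable (by fun_prop)).restrict
    · exact (Continuous.intervalIntegrable (by fun_prop) _ _)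
    · exact (Continuous.aestronglyMeasurable (by fun_prop)).restrict
    · filter_upwards with t ht x _
      have ht' : t ∈ Set.Ioc (0:ℝ) 2 := by
        simpa [Set.uIoc_of_le (by norm_num : (0:ℝ) ≤ 2)] using ht
      have h1 : |1 - t/2| ≤ 1 := by
        rw [abs_le]; constructor <;> nlinarith [ht'.1, ht'.2]
      have h2 : |t^(k+1)| ≤ 2^(k+1) := by
        rw [abs_pow]
        exact pow_le_pow_left₀ (abs_nonneg t) (by rw [abs_le]; constructor <;> nlinarith [ht'.1, ht'.2]) _
      calc ‖(1 - t/2) * t^(k+1) * Real.cos (t*x + (k+1)*(π/2))‖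
          = |1 - t/2| * |t^(k+1)| * |Real.cos (t*x + (k+1)*(π/2))| := by
            simp [Real.norm_eq_abs, abs_mul]
        _ ≤ 1 * 2^(k+1) * 1 := by
            gcongr
            exact Real.abs_cos_le_one _
        _ = 2^(k+1) := by ring
    · exact intervalIntegrable_const
    · filter_upwards with t _ x _
      have hinner : HasDerivAt (fun x : ℝ => t*x + k*(π/2)) t x := by
        simpa using ((hasDerivAt_id x).const_mul t).add_const (k*(π/2))
      have h := ((Real.hasDerivAt_cos (t*x + k*(π/2))).comp x hinner).const_mul ((1 - t/2) * t^k)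
      have heq : (1 - t/2) * t^(k+1) * Real.cos (t*x + ((k:ℕ)+1)*(π/2))
          = (1 - t/2) * t^k * (-Real.sin (t*x + k*(π/2)) * t) := by
        have h1 : t*x + (((k:ℕ)+1):ℝ)*(π/2) = (t*x + k*(π/2)) + π/2 := by push_cast; ring
        push_cast
        rw [h1, Real.cos_add_pi_div_two]
        ring
      rw [heq]
      simpa [Function.comp] using h
  exact key.2.congr_deriv (by simp [HK])

lemma abs_HK_le (k : ℕ) (y : ℝ) : |HK k y| ≤ ∫ t in (0:ℝ)..2, (1 - t/2) * t^k := by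
  have h02 : (0:ℝ) ≤ 2 := by norm_num
  calc |HK k y| ≤ ∫ t in (0:ℝ)..2, |(1 - t/2) * t^k * Real.cos (t*y + k*(π/2))| :=
        intervalIntegral.abs_integral_le_integral_abs h02
    _ ≤ ∫ t in (0:ℝ)..2, (1 - t/2) * t^k := by
        apply intervalIntegral.integral_mono_on h02
        · exact (Continuous.intervalIntegrable (by fun_prop) _ _).abs
        · exact Continuous.intervalIntegrable (by fun_prop) _ _
        · intro t ht
          rw [Set.mem_Icc] at ht
          have hnn : 0 ≤ (1 - t/2) * t^k := by
            apply mul_nonneg (by linarith [ht.2]) (pow_nonneg ht.1 _)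
          calc |(1 - t/2) * t^k * Real.cos (t*y + k*(π/2))|
              = ((1 - t/2) * t^k) * |Real.cos (t*y + k*(π/2))| := by
                rw [abs_mul, abs_of_nonneg hnn]
            _ ≤ ((1 - t/2) * t^k) * 1 := by
                exact mul_le_mul_of_nonneg_left (Real.abs_cos_le_one _) hnn
            _ = (1 - t/2) * t^k := by ring

lemma intpoly (k : ℕ) : (∫ t in (0:ℝ)..2, (1 - t/2) * t^k)
    = 2^(k+1)/(k+1) - 2^(k+2)/(2*(k+2)) := by
  have : ∀ t : ℝ, (1 - t/2) * t^k = t^k - t^(k+1)/2 := by intro t; ring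
  simp_rw [this]
  rw [intervalIntegral.integral_sub ((continuous_pow k).intervalIntegrable _ _)
    (Continuous.intervalIntegrable (by fun_prop) _ _)]
  have h1 : (∫ t in (0:ℝ)..2, t^k) = (2^(k+1) - 0^(k+1))/(k+1) := integral_pow k
  have h2 : (∫ t in (0:ℝ)..2, t^(k+1)/2) = (∫ t in (0:ℝ)..2, t^(k+1))/2 :=
    intervalIntegral.integral_div 2 _
  have h3 : (∫ t in (0:ℝ)..2, t^(k+1)) = 2^(k+2)/((k:ℝ)+2) := by
    rw [integral_pow]
    simp
    push_cast
    ring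
  rw [h1, h2, h3]
  have hk1 : ((k:ℝ)+1) ≠ 0 := by positivity
  have hk2 : ((k:ℝ)+2) ≠ 0 := by positivity
  push_cast
  field_simp
  ring

lemma abs_HK0_le (y : ℝ) : |HK 0 y| ≤ 1 := by
  have := abs_HK_le 0 y; rw [intpoly 0] at this; norm_num at this ⊢; linarith
lemma abs_HK1_le (y : ℝ) : |HK 1 y| ≤ 2/3 := by
  have := abs_HK_le 1 y; rw [intpoly 1] at this; norm_num at this ⊢; linarith
lemma abs_HK2_le (y : ℝ) : |HK 2 y| ≤ 2/3 := by
  have := abs_HK_le 2 y; rw [intpoly 2] at this; norm_num at this ⊢; linarith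
lemma abs_HK3_le (y : ℝ) : |HK 3 y| ≤ 4/5 := by
  have := abs_HK_le 3 y; rw [intpoly 3] at this; norm_num at this ⊢; linarith
lemma abs_HK4_le (y : ℝ) : |HK 4 y| ≤ 16/15 := by
  have := abs_HK_le 4 y; rw [intpoly 4] at this; norm_num at this ⊢; linarith

lemma sinc_sq (y : ℝ) : _root_.sinc y ^ 2 = HK 0 y := by
  rcases eq_or_ne y 0 with rfl | hy
  · have : HK 0 0 = ∫ t in (0:ℝ)..2, (1 - t/2) := by
      unfold HK
      congr 1
      funext t
      norm_num
    rw [_root_.sinc, if_pos rfl, this]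
    rw [intervalIntegral.integral_sub intervalIntegrable_const
      (Continuous.intervalIntegrable (by fun_prop) _ _)]
    simp
    norm_num
  · -- y ≠ 0 : explicit antiderivative
    set G : ℝ → ℝ := fun t => (1 - t/2) * Real.sin (t*y)/y - Real.cos (t*y)/(2*y^2) with hG
    have hderiv : ∀ t ∈ Set.uIcc (0:ℝ) 2, HasDerivAt G ((1 - t/2) * t^(0:ℕ) * Real.cos (t*y + (0:ℕ)*(π/2))) t := by
      intro t _
      have h1 : HasDerivAt (fun t : ℝ => t*y) y t := by
        simpa using (hasDerivAt_id t).mul_const y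
      have hsin : HasDerivAt (fun t : ℝ => Real.sin (t*y)) (Real.cos (t*y) * y) t :=
        h1.sin
      have hcos : HasDerivAt (fun t : ℝ => Real.cos (t*y)) (-Real.sin (t*y) * y) t :=
        h1.cos
      have hlin : HasDerivAt (fun t : ℝ => 1 - t/2) (-(1/2)) t := by
        simpa using ((hasDerivAt_id t).div_const 2).const_sub 1
      have hmul := hlin.mul hsin
      have h := ((hmul).div_const y).sub (hcos.div_const (2*y^2))
      refine h.congr_deriv ?_
      simp only [pow_zero, Nat.cast_zero, zero_mul, add_zero, mul_one]
      field_simp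
      ring
    have key := intervalIntegral.integral_eq_sub_of_hasDerivAt hderiv
      (Continuous.intervalIntegrable (by fun_prop) _ _)
    have hHK : HK 0 y = G 2 - G 0 := key
    rw [_root_.sinc, if_neg hy, hHK, hG]
    simp only []
    have h2 : Real.cos (2*y) = 1 - 2 * Real.sin y ^ 2 := by
      rw [Real.cos_two_mul]
      nlinarith [Real.sin_sq_add_cos_sq y]
    have : (2:ℝ)*y = 2*y := rfl
    field_simp
    simp only [mul_zero, Real.sin_zero, Real.cos_zero, sub_self, sub_zero, zero_mul, mul_comm y 2]
    nlinarith [Real.sin_sq_add_cos_sq y, sq_nonneg y, h2]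

lemma contDiff_HK (n : ℕ) : ∀ k, ContDiff ℝ n (HK k) := by
  induction n with
  | zero =>
    intro k
    rw [Nat.cast_zero, contDiff_zero]
    exact Differentiable.continuous (fun x => (hasDerivAt_HK k x).differentiableAt)
  | succ n ih =>
    intro k
    rw [Nat.cast_succ, contDiff_succ_iff_deriv]
    refine ⟨fun x => (hasDerivAt_HK k x).differentiableAt, ?_⟩
    have : deriv (HK k) = HK (k+1) := funext fun x => (hasDerivAt_HK k x).deriv
    rw [this]
    exact ⟨fun h => (WithTop.natCast_ne_top n h).elim, ih (k+1)⟩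

noncomputable def phiF : ℕ → ℝ → ℝ
  | 0, x => HK 0 (x/4) ^ 2
  | 1, x => (1/2) * (HK 0 (x/4) * HK 1 (x/4))
  | 2, x => (1/8) * (HK 1 (x/4)^2 + HK 0 (x/4) * HK 2 (x/4))
  | 3, x => (1/32) * (3 * (HK 1 (x/4) * HK 2 (x/4)) + HK 0 (x/4) * HK 3 (x/4))
  | 4, x => (1/128) * (3 * HK 2 (x/4)^2 + 4 * (HK 1 (x/4) * HK 3 (x/4)) + HK 0 (x/4) * HK 4 (x/4))
  | (_+5), _ => 0

lemma hasDerivAt_HK4 (k : ℕ) (x : ℝ) :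
    HasDerivAt (fun x => HK k (x/4)) (HK (k+1) (x/4) / 4) x := by
  have h := (hasDerivAt_HK k (x/4)).comp x ((hasDerivAt_id x).div_const 4)
  simpa [div_eq_mul_inv, Function.comp_def] using h

lemma hasDerivAt_phiF {k : ℕ} (hk : k ≤ 3) (x : ℝ) :
    HasDerivAt (phiF k) (phiF (k+1) x) x := by
  interval_cases k
  · have h := ((hasDerivAt_HK4 0 x).pow 2)
    have : phiF 1 x = (↑2 * HK 0 (x/4) ^ (2-1)) * (HK 1 (x/4) / 4) := by
      show (1/2) * (HK 0 (x/4) * HK 1 (x/4)) = _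
      push_cast
      ring
    rw [show phiF 0 = fun x => HK 0 (x/4) ^ 2 from rfl] at *
    rw [this]
    exact h
  · have h := (((hasDerivAt_HK4 0 x).mul (hasDerivAt_HK4 1 x))).const_mul (1/2 : ℝ)
    have : phiF 2 x = (1/2) * (HK 1 (x/4) / 4 * HK 1 (x/4) + HK 0 (x/4) * (HK 2 (x/4) / 4)) := by
      show (1/8) * (HK 1 (x/4)^2 + HK 0 (x/4) * HK 2 (x/4)) = _
      ring
    rw [this]
    exact h
  · have h := (((hasDerivAt_HK4 1 x).pow 2).add ((hasDerivAt_HK4 0 x).mul (hasDerivAt_HK4 2 x))).const_mul (1/8 : ℝ)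
    have : phiF 3 x = (1/8) * (↑2 * HK 1 (x/4) ^ (2-1) * (HK 2 (x/4)/4) + (HK 1 (x/4) / 4 * HK 2 (x/4) + HK 0 (x/4) * (HK 3 (x/4) / 4))) := by
      show (1/32) * (3 * (HK 1 (x/4) * HK 2 (x/4)) + HK 0 (x/4) * HK 3 (x/4)) = _
      push_cast
      ring
    rw [this]
    exact h
  · have h := ((((hasDerivAt_HK4 1 x).mul (hasDerivAt_HK4 2 x)).const_mul (3:ℝ)).add
      ((hasDerivAt_HK4 0 x).mul (hasDerivAt_HK4 3 x))).const_mul (1/32 : ℝ)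
    have : phiF 4 x = (1/32) * (3 * (HK 2 (x/4)/4 * HK 2 (x/4) + HK 1 (x/4) * (HK 3 (x/4)/4)) + (HK 1 (x/4)/4 * HK 3 (x/4) + HK 0 (x/4) * (HK 4 (x/4)/4))) := by
      show (1/128) * (3 * HK 2 (x/4)^2 + 4 * (HK 1 (x/4) * HK 3 (x/4)) + HK 0 (x/4) * HK 4 (x/4)) = _
      ring
    rw [this]
    exact h

lemma abs_phiF_le {k : ℕ} (hk : k ≤ 4) (x : ℝ) : |phiF k x| ≤ (1/2)^k := by
  have h0 := abs_HK0_le (x/4)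
  have h1 := abs_HK1_le (x/4)
  have h2 := abs_HK2_le (x/4)
  have h3 := abs_HK3_le (x/4)
  have h4 := abs_HK4_le (x/4)
  have n0 := abs_nonneg (HK 0 (x/4))
  have n1 := abs_nonneg (HK 1 (x/4))
  have n2 := abs_nonneg (HK 2 (x/4))
  have n3 := abs_nonneg (HK 3 (x/4))
  have n4 := abs_nonneg (HK 4 (x/4))
  interval_cases k
  · show |HK 0 (x/4) ^ 2| ≤ _
    rw [abs_pow]
    norm_num
    nlinarith
  · show |(1/2) * (HK 0 (x/4) * HK 1 (x/4))| ≤ _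
    rw [abs_mul, abs_mul, show |(1/2:ℝ)| = 1/2 by norm_num]
    norm_num
    nlinarith [mul_le_mul h0 h1 n1 zero_le_one]
  · show |(1/8) * (HK 1 (x/4)^2 + HK 0 (x/4) * HK 2 (x/4))| ≤ _
    rw [abs_mul, show |(1/8:ℝ)| = 1/8 by norm_num]
    have t1 := abs_add_le (HK 1 (x/4)^2) (HK 0 (x/4) * HK 2 (x/4))
    rw [abs_pow, abs_mul] at t1
    norm_num at t1 ⊢
    nlinarith [mul_le_mul h1 h1 n1 (by norm_num : (0:ℝ) ≤ 2/3),
      mul_le_mul h0 h2 n2 zero_le_one, sq_abs (HK 1 (x/4))]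
  · show |(1/32) * (3 * (HK 1 (x/4) * HK 2 (x/4)) + HK 0 (x/4) * HK 3 (x/4))| ≤ _
    rw [abs_mul, show |(1/32:ℝ)| = 1/32 by norm_num]
    have t1 := abs_add_le (3 * (HK 1 (x/4) * HK 2 (x/4))) (HK 0 (x/4) * HK 3 (x/4))
    rw [abs_mul, abs_mul, abs_mul, show |(3:ℝ)| = 3 by norm_num] at t1
    norm_num at t1 ⊢
    nlinarith [mul_le_mul h1 h2 n2 (by norm_num : (0:ℝ) ≤ 2/3),
      mul_le_mul h0 h3 n3 zero_le_one]
  · show |(1/128) * (3 * HK 2 (x/4)^2 + 4 * (HK 1 (x/4) * HK 3 (x/4)) + HK 0 (x/4) * HK 4 (x/4))| ≤ _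
    rw [abs_mul, show |(1/128:ℝ)| = 1/128 by norm_num]
    have t1 := abs_add_le (3 * HK 2 (x/4)^2 + 4 * (HK 1 (x/4) * HK 3 (x/4))) (HK 0 (x/4) * HK 4 (x/4))
    have t2 := abs_add_le (3 * HK 2 (x/4)^2) (4 * (HK 1 (x/4) * HK 3 (x/4)))
    rw [abs_mul, abs_mul, abs_mul, abs_pow, show |(3:ℝ)| = 3 by norm_num,
      show |(4:ℝ)| = 4 by norm_num] at t2
    rw [abs_mul] at t1
    norm_num at t1 t2 ⊢
    nlinarith [mul_le_mul h2 h2 n2 (by norm_num : (0:ℝ) ≤ 2/3),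
      mul_le_mul h1 h3 n3 (by norm_num : (0:ℝ) ≤ 2/3),
      mul_le_mul h0 h4 n4 zero_le_one, sq_abs (HK 2 (x/4))]

lemma contDiff_phiF {k : ℕ} (hk : k ≤ 4) : ContDiff ℝ 4 (phiF k) := by
  have hdiv : ContDiff ℝ 4 (fun x : ℝ => x/4) := contDiff_id.div_const 4
  have hH : ∀ j : ℕ, ContDiff ℝ 4 (fun x : ℝ => HK j (x/4)) := fun j =>
    (contDiff_HK 4 j).comp hdiv
  interval_cases k
  · exact (hH 0).pow 2
  · exact contDiff_const.mul ((hH 0).mul (hH 1))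
  · exact contDiff_const.mul (((hH 1).pow 2).add ((hH 0).mul (hH 2)))
  · exact contDiff_const.mul ((contDiff_const.mul ((hH 1).mul (hH 2))).add ((hH 0).mul (hH 3)))
  · exact contDiff_const.mul (((contDiff_const.mul ((hH 2).pow 2)).add (contDiff_const.mul ((hH 1).mul (hH 3)))).add ((hH 0).mul (hH 4)))

section Multi

variable {d : ℕ}

noncomputable def PP (m : Fin d → ℕ) (y : EuclideanSpace ℝ (Fin d)) : ℝ :=
  ∏ i, phiF (m i) (y i)

lemma contDiff_PP (m : Fin d → ℕ) (hm : ∀ i, m i ≤ 4) : ContDiff ℝ 4 (PP m) := by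
  apply contDiff_prod
  intro i _
  exact (contDiff_phiF (hm i)).comp (EuclideanSpace.proj (𝕜 := ℝ) i).contDiff

lemma hasFDerivAt_PP (m : Fin d → ℕ) (hm : ∀ i, m i ≤ 3) (y : EuclideanSpace ℝ (Fin d)) :
    HasFDerivAt (PP m)
      (∑ i, (∏ j ∈ Finset.univ.erase i, phiF (m j) (y j)) •
        (phiF (m i + 1) (y i) • (EuclideanSpace.proj i : EuclideanSpace ℝ (Fin d) →L[ℝ] ℝ))) y := by
  apply HasFDerivAt.finset_prod
  intro i _
  have hp : HasFDerivAt (fun y : EuclideanSpace ℝ (Fin d) => y i)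
      (EuclideanSpace.proj (𝕜 := ℝ) i) y := (EuclideanSpace.proj (𝕜 := ℝ) i).hasFDerivAt
  exact (hasDerivAt_phiF (hm i) (y i)).comp_hasFDerivAt y hp

def incM (m : Fin d → ℕ) (j : Fin d) : Fin d → ℕ := Function.update m j (m j + 1)

lemma incM_le {m : Fin d → ℕ} {j i : Fin d} : incM m j i ≤ m i + 1 := by
  unfold incM
  rcases eq_or_ne i j with rfl | h
  · simp
  · rw [Function.update_of_ne h]; omega

lemma fderiv_PP (m : Fin d → ℕ) (hm : ∀ i, m i ≤ 3) (j : Fin d) :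
    (fun y => fderiv ℝ (PP m) y (EuclideanSpace.single j 1)) = PP (incM m j) := by
  funext y
  rw [(hasFDerivAt_PP m hm y).fderiv]
  rw [ContinuousLinearMap.sum_apply]
  have hterm : ∀ i : Fin d,
      ((∏ k ∈ Finset.univ.erase i, phiF (m k) (y k)) •
        (phiF (m i + 1) (y i) • (EuclideanSpace.proj i : EuclideanSpace ℝ (Fin d) →L[ℝ] ℝ)))
        (EuclideanSpace.single j 1)
      = (∏ k ∈ Finset.univ.erase i, phiF (m k) (y k)) * (phiF (m i + 1) (y i) *
          (if i = j then 1 else 0)) := by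
    intro i
    rw [ContinuousLinearMap.smul_apply, ContinuousLinearMap.smul_apply]
    have : (EuclideanSpace.proj i : EuclideanSpace ℝ (Fin d) →L[ℝ] ℝ)
        (EuclideanSpace.single j 1) = (if i = j then 1 else 0) := by
      simp [EuclideanSpace.single_apply]
    rw [this]
    simp [smul_eq_mul]
  simp_rw [hterm]
  rw [Finset.sum_eq_single j]
  · rw [if_pos rfl, mul_one]
    unfold PP incM
    rw [← Finset.mul_prod_erase _ (fun i => phiF (Function.update m j (m j + 1) i) (y i))
      (Finset.mem_univ j), Function.update_self]
    have herase : ∏ k ∈ Finset.univ.erase j, phiF (Function.update m j (m j + 1) k) (y k)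
        = ∏ k ∈ Finset.univ.erase j, phiF (m k) (y k) :=
      Finset.prod_congr rfl (fun i hi => by
        rw [Function.update_of_ne (Finset.ne_of_mem_erase hi)])
    rw [herase]
    ring
  · intro i _ hij
    rw [if_neg hij, mul_zero, mul_zero]
  · intro h
    exact absurd (Finset.mem_univ j) h

lemma sum_incM (m : Fin d → ℕ) (j : Fin d) : ∑ i, incM m j i = (∑ i, m i) + 1 := by
  unfold incM
  rw [Finset.sum_update_of_mem (Finset.mem_univ j), Finset.sdiff_singleton_eq_erase]
  rw [← Finset.add_sum_erase _ m (Finset.mem_univ j)]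
  omega

lemma abs_PP_le (m : Fin d → ℕ) (hm : ∀ i, m i ≤ 4) (u : EuclideanSpace ℝ (Fin d)) :
    |PP m u| ≤ (1/2 : ℝ) ^ (∑ i, m i) := by
  unfold PP
  rw [Finset.abs_prod]
  calc (∏ i, |phiF (m i) (u i)|) ≤ ∏ i, (1/2 : ℝ) ^ (m i) := by
        apply Finset.prod_le_prod
        · intro i _; exact abs_nonneg _
        · intro i _; exact abs_phiF_le (hm i) (u i)
    _ = (1/2 : ℝ) ^ (∑ i, m i) := by
        rw [Finset.prod_pow_eq_pow_sum]

end Multi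

lemma peel {E : Type*} [NormedAddCommGroup E] [NormedSpace ℝ E] (f : E → ℝ) (n : ℕ)
    (hf : ContDiff ℝ (n+1 : ℕ) f) (x : E) (m : Fin (n+1) → E) :
    iteratedFDeriv ℝ (n+1) f x m
      = iteratedFDeriv ℝ n (fun y => fderiv ℝ f y (m (Fin.last n))) x (Fin.init m) := by
  rw [iteratedFDeriv_succ_apply_right]
  have hc : ContDiff ℝ n (fderiv ℝ f) := hf.fderiv_right (by push_cast; exact le_refl _)
  exact (iteratedFDeriv_clm_apply_const_apply hc (le_refl _)).symm

theorem stmt_9 (d : ℕ) (hd : 1 ≤ d) (i₁ i₂ i₃ i₄ : Fin d) (u : EuclideanSpace ℝ (Fin d)) :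
    |iteratedFDeriv ℝ 4 (Psi1 d) u
        ![EuclideanSpace.single i₁ (1 : ℝ), EuclideanSpace.single i₂ (1 : ℝ),
          EuclideanSpace.single i₃ (1 : ℝ), EuclideanSpace.single i₄ (1 : ℝ)]| ≤ 1 / 16 := by
  classical
  set v : Fin d → EuclideanSpace ℝ (Fin d) := fun a => EuclideanSpace.single a (1 : ℝ) with hv
  have hPsi : Psi1 d = PP (fun _ => 0) := by
    funext y
    unfold Psi1 PP
    refine Finset.prod_congr rfl fun i _ => ?_
    show _root_.sinc (y i / 4) ^ 4 = HK 0 (y i / 4) ^ 2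
    rw [← sinc_sq]
    ring
  set m0 : Fin d → ℕ := fun _ => 0 with hm0
  set m1 := incM m0 i₄ with hm1
  set m2 := incM m1 i₃ with hm2
  set m3 := incM m2 i₂ with hm3
  set m4 := incM m3 i₁ with hm4
  have b0 : ∀ i, m0 i ≤ 0 := fun i => le_refl _
  have b1 : ∀ i, m1 i ≤ 1 := fun i => incM_le.trans (Nat.succ_le_succ (b0 i))
  have b2 : ∀ i, m2 i ≤ 2 := fun i => incM_le.trans (Nat.succ_le_succ (b1 i))
  have b3 : ∀ i, m3 i ≤ 3 := fun i => incM_le.trans (Nat.succ_le_succ (b2 i))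
  have b4 : ∀ i, m4 i ≤ 4 := fun i => incM_le.trans (Nat.succ_le_succ (b3 i))
  have c0 : ContDiff ℝ 4 (PP m0) := contDiff_PP _ (fun i => (b0 i).trans (by norm_num))
  have c1 : ContDiff ℝ 4 (PP m1) := contDiff_PP _ (fun i => (b1 i).trans (by norm_num))
  have c2 : ContDiff ℝ 4 (PP m2) := contDiff_PP _ (fun i => (b2 i).trans (by norm_num))
  have c3 : ContDiff ℝ 4 (PP m3) := contDiff_PP _ (fun i => (b3 i).trans (by norm_num))
  have step1 : iteratedFDeriv ℝ 4 (Psi1 d) u ![v i₁, v i₂, v i₃, v i₄]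
      = iteratedFDeriv ℝ 3 (PP m1) u ![v i₁, v i₂, v i₃] := by
    rw [hPsi]
    rw [peel (PP m0) 3 (by exact_mod_cast c0) u ![v i₁, v i₂, v i₃, v i₄]]
    have hlast : (![v i₁, v i₂, v i₃, v i₄]) (Fin.last 3) = v i₄ := rfl
    have hinit : Fin.init (![v i₁, v i₂, v i₃, v i₄]) = ![v i₁, v i₂, v i₃] := by
      funext k; fin_cases k <;> rfl
    rw [hlast, hinit, fderiv_PP m0 (fun i => (b0 i).trans (by norm_num)) i₄]
  have step2 : iteratedFDeriv ℝ 3 (PP m1) u ![v i₁, v i₂, v i₃]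
      = iteratedFDeriv ℝ 2 (PP m2) u ![v i₁, v i₂] := by
    rw [peel (PP m1) 2 (by exact_mod_cast c1.of_le (by norm_num)) u ![v i₁, v i₂, v i₃]]
    have hlast : (![v i₁, v i₂, v i₃]) (Fin.last 2) = v i₃ := rfl
    have hinit : Fin.init (![v i₁, v i₂, v i₃]) = ![v i₁, v i₂] := by
      funext k; fin_cases k <;> rfl
    rw [hlast, hinit, fderiv_PP m1 (fun i => (b1 i).trans (by norm_num)) i₃]
  have step3 : iteratedFDeriv ℝ 2 (PP m2) u ![v i₁, v i₂]
      = iteratedFDeriv ℝ 1 (PP m3) u ![v i₁] := by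
    rw [peel (PP m2) 1 (by exact_mod_cast c2.of_le (by norm_num)) u ![v i₁, v i₂]]
    have hlast : (![v i₁, v i₂]) (Fin.last 1) = v i₂ := rfl
    have hinit : Fin.init (![v i₁, v i₂]) = ![v i₁] := by
      funext k; fin_cases k <;> rfl
    rw [hlast, hinit, fderiv_PP m2 (fun i => (b2 i).trans (by norm_num)) i₂]
  have step4 : iteratedFDeriv ℝ 1 (PP m3) u ![v i₁]
      = PP m4 u := by
    rw [peel (PP m3) 0 (by exact_mod_cast c3.of_le (by norm_num)) u ![v i₁]]
    have hlast : (![v i₁]) (Fin.last 0) = v i₁ := rfl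
    rw [hlast, fderiv_PP m3 b3 i₁]
    rw [iteratedFDeriv_zero_apply]
  rw [step1, step2, step3, step4]
  have hsum : ∑ i, m4 i = 4 := by
    rw [hm4, sum_incM, hm3, sum_incM, hm2, sum_incM, hm1, sum_incM]
    simp [hm0]
  have := abs_PP_le m4 b4 u
  rw [hsum] at this
  calc |PP m4 u| ≤ (1/2 : ℝ)^4 := this
    _ = 1/16 := by norm_num
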